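/- Let Q(x) = diag(q_{11}(x),…,q_{dd}(x)) + Q₀(x) with Q₀(x) real antisymmetric, inf_{x} q_{ii}(x) > k₁ > 0 for every i, and Σ_{j ≠ i}|q_{ij}(x)| ≤ k₂ q_{ii}(x) for every i and x. Suppose the m×m real matrices A^{hk}(x) satisfy Σ_{h,k=1}^d (A^{hk}(x)ϑ^k, ϑ^h) ≥ 0 for all ϑ¹,…,ϑ^d ∈ ℝ^m, 0 ≤ a^{hh}_{ij}(x) ≤ k₂ q_{hh}(x) for all i,j = 1,…,m and h = 1,…,d, and |a^{hk}_{ij}(x)| ≤ k₃ min_{r=1,…,d} q_{rr}(x) for all i,j = 1,…,m and h ≠ k, for some constant k₃ > 0. Then for every x ∈ ℝ^d and θ¹,…,θ^d ∈ ℂ^m, 0 ≤ Re Σ_{h,k=1}^d (A^{hk}(x)θ^k, θ^h) ≤ m(k₂ + d k₃) Re Σ_{i=1}^m Σ_{h,k=1}^d q_{hk}(x) θ^k_i conj(θ^h_i) and |Im Σ_{h,k=1}^d (A^{hk}(x)θ^k, θ^h)| ≤ m(k₂ + d k₃) Re Σ_{i=1}^m Σ_{h,k=1}^d q_{hk}(x)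 θ^k_i conj(θ^h_i); that is, the structural conditions on the coupling matrices hold with constant 𝒞 = m(k₂ + d k₃). -/

import Mathlib

open ComplexConjugate

noncomputable section

lemma aux_term (A qk qh a b : ℝ) (ha : 0 ≤ a) (hb : 0 ≤ b)
    (h1 : |A| ≤ qk) (h2 : |A| ≤ qh) :
    |A| * a * b ≤ (qk * a ^ 2 + qh * b ^ 2) / 2 := by
  nlinarith [abs_nonneg A, mul_nonneg (abs_nonneg A) (sq_nonneg (a - b)),
    mul_le_mul_of_nonneg_right h1 (sq_nonneg a),
    mul_le_mul_of_nonneg_right h2 (sq_nonneg b)]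


/-- `Σ_{h,k} (A^{hk}(x) θ^k, θ^h)` for a family of `m × m` real matrix-valued functions
`A^{hk}` on `ℝ^d`, with `(u,v) = Σ_i u_i conj(v_i)` the Hermitian inner product. -/
def Aform {d m : ℕ} (A : Fin d → Fin d → Fin m → Fin m → (Fin d → ℝ) → ℝ)
    (x : Fin d → ℝ) (θ : Fin d → Fin m → ℂ) : ℂ :=
  ∑ h, ∑ k, ∑ i, ∑ j, (A h k i j x : ℂ) * θ k j * conj (θ h i)

/-- `Σ_{i=1}^m Σ_{h,k=1}^d q_{hk}(x) θ^k_i conj(θ^h_i)`. -/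
def Qdiagform {d m : ℕ} (q : Fin d → Fin d → (Fin d → ℝ) → ℝ)
    (x : Fin d → ℝ) (θ : Fin d → Fin m → ℂ) : ℂ :=
  ∑ i, ∑ h, ∑ k, (q h k x : ℂ) * θ k i * conj (θ h i)

theorem statement19 (d m : ℕ) (hd : 0 < d) (hm : 0 < m)
    (q : Fin d → Fin d → (Fin d → ℝ) → ℝ)
    (A : Fin d → Fin d → Fin m → Fin m → (Fin d → ℝ) → ℝ)
    (k₁ k₂ k₃ : ℝ) (hk₁ : 0 < k₁) (hk₂ : 0 < k₂) (hk₃ : 0 < k₃)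
    -- `Q = diag(q₁₁,…,q_dd) + Q₀` with `Q₀` antisymmetric:
    (hanti : ∀ (x : Fin d → ℝ) (i j : Fin d), i ≠ j → q i j x = - q j i x)
    -- `inf_x q_ii(x) > k₁`:
    (hdiag : ∀ (i : Fin d) (x : Fin d → ℝ), k₁ < q i i x)
    -- `Σ_{j ≠ i} |q_ij(x)| ≤ k₂ q_ii(x)`:
    (hbound : ∀ (i : Fin d) (x : Fin d → ℝ),
      ∑ j ∈ Finset.univ.erase i, |q i j x| ≤ k₂ * q i i x)
    -- `Σ_{h,k} (A^{hk}(x) ϑ^k, ϑ^h) ≥ 0` for real vectors: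
    (hApos : ∀ (x : Fin d → ℝ) (ϑ : Fin d → Fin m → ℝ),
      0 ≤ ∑ h, ∑ k, ∑ i, ∑ j, A h k i j x * ϑ k j * ϑ h i)
    -- `0 ≤ a^{hh}_{ij}(x) ≤ k₂ q_{hh}(x)`:
    (hAdiag : ∀ (x : Fin d → ℝ) (h : Fin d) (i j : Fin m),
      0 ≤ A h h i j x ∧ A h h i j x ≤ k₂ * q h h x)
    -- `|a^{hk}_{ij}(x)| ≤ k₃ min_{r=1,…,d} q_rr(x)` for `h ≠ k`:
    (hAoff : ∀ (x : Fin d → ℝ) (h k : Fin d), h ≠ k → ∀ (i j : Fin m) (r : Fin d),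
      |A h k i j x| ≤ k₃ * q r r x) :
    ∀ (x : Fin d → ℝ) (θ : Fin d → Fin m → ℂ),
      0 ≤ (Aform A x θ).re ∧
      (Aform A x θ).re ≤ (m : ℝ) * (k₂ + d * k₃) * (Qdiagform q x θ).re ∧
      |(Aform A x θ).im| ≤ (m : ℝ) * (k₂ + d * k₃) * (Qdiagform q x θ).re := by
  intro x θ
  set a : Fin d → Fin m → ℝ := fun h i => ‖θ h i‖ with ha
  have hanonneg : ∀ h i, 0 ≤ a h i := fun h i => norm_nonneg _
  set P : Fin d → ℝ := fun h => q h h x * ∑ i, (a h i) ^ 2 with hP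
  set S : ℝ := ∑ h, P h with hS
  have hq : ∀ h : Fin d, 0 ≤ q h h x := fun h => le_of_lt (lt_trans hk₁ (hdiag h x))
  have hPnn : ∀ h, 0 ≤ P h := fun h =>
    mul_nonneg (hq h) (Finset.sum_nonneg fun i _ => sq_nonneg _)
  have hSnn : 0 ≤ S := Finset.sum_nonneg fun h _ => hPnn h
  -- Step A : Qdiagform re = S
  have key : ∀ i : Fin m, (∑ h, ∑ k, q h k x * (θ k i * conj (θ h i)).re)
      = ∑ h, q h h x * (a h i) ^ 2 := by
    intro i
    set f : Fin d → Fin d → ℝ := fun h k => q h k x * (θ k i * conj (θ h i)).re with hf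
    have hsym : ∀ h k : Fin d, (θ k i * conj (θ h i)).re = (θ h i * conj (θ k i)).re := by
      intro h k
      simp [Complex.mul_re, Complex.conj_re, Complex.conj_im]
      ring
    have hpt : ∀ h k, f h k + f k h = if h = k then 2 * f h h else 0 := by
      intro h k
      by_cases hkh : h = k
      · subst hkh; simp [f]; ring
      · simp only [hkh, if_false, hf]
        rw [hanti x h k hkh, hsym h k]
        ring
    have hdouble : (∑ h, ∑ k, (f h k + f k h)) = 2 * (∑ h, ∑ k, f h k) := by
      calc (∑ h, ∑ k, (f h k + f k h))
          = (∑ h, ∑ k, f h k) + (∑ h, ∑ k, f k h) := by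
            simp [Finset.sum_add_distrib]
        _ = (∑ h, ∑ k, f h k) + (∑ k, ∑ h, f k h) := by rw [Finset.sum_comm]
        _ = 2 * ∑ h, ∑ k, f h k := by ring
    have hdiagval : ∀ h : Fin d, f h h = q h h x * (a h i) ^ 2 := by
      intro h
      simp only [hf, Complex.mul_conj, Complex.ofReal_re]
      rw [ha]
      rw [Complex.sq_norm]
    have h2 : 2 * (∑ h, ∑ k, f h k) = 2 * ∑ h, f h h := by
      rw [← hdouble]
      rw [Finset.sum_congr rfl fun h _ => Finset.sum_congr rfl fun k _ => hpt h k]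
      simp [Finset.mul_sum]
    have := mul_left_cancel₀ (two_ne_zero (α := ℝ)) h2
    rw [show (∑ h, ∑ k, q h k x * (θ k i * conj (θ h i)).re) = ∑ h, ∑ k, f h k from rfl, this]
    exact Finset.sum_congr rfl fun h _ => hdiagval h
  have hQre : (Qdiagform q x θ).re = S := by
    rw [Qdiagform, Complex.re_sum]
    have : ∀ i : Fin m, (∑ h, ∑ k, (q h k x : ℂ) * θ k i * conj (θ h i)).re
        = ∑ h, q h h x * (a h i) ^ 2 := by
      intro i
      rw [Complex.re_sum]
      rw [show (∑ h, (∑ k, (q h k x : ℂ) * θ k i * conj (θ h i)).re)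
          = ∑ h, ∑ k, q h k x * (θ k i * conj (θ h i)).re from
        Finset.sum_congr rfl fun h _ => by
          rw [Complex.re_sum]
          exact Finset.sum_congr rfl fun k _ => by
            rw [mul_assoc]; simp]
      exact key i
    rw [Finset.sum_congr rfl fun i _ => this i, Finset.sum_comm]
    simp [hS, hP, Finset.mul_sum]
  -- Step B : Aform.re as two real quadratic forms
  have hAre : (Aform A x θ).re
      = (∑ h, ∑ k, ∑ i, ∑ j, A h k i j x * (θ k j).re * (θ h i).re)
      + (∑ h, ∑ k, ∑ i, ∑ j, A h k i j x * (θ k j).im * (θ h i).im) := by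
    rw [Aform]
    rw [show ((∑ h, ∑ k, ∑ i, ∑ j, (A h k i j x : ℂ) * θ k j * conj (θ h i)).re)
        = ∑ h, ∑ k, ∑ i, ∑ j, ((A h k i j x : ℂ) * θ k j * conj (θ h i)).re from by
      rw [Complex.re_sum]
      exact Finset.sum_congr rfl fun h _ => by
        rw [Complex.re_sum]
        exact Finset.sum_congr rfl fun k _ => by
          rw [Complex.re_sum]
          exact Finset.sum_congr rfl fun i _ => Complex.re_sum _ _]
    rw [← Finset.sum_add_distrib]
    refine Finset.sum_congr rfl fun h _ => ?_
    rw [← Finset.sum_add_distrib]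
    refine Finset.sum_congr rfl fun k _ => ?_
    rw [← Finset.sum_add_distrib]
    refine Finset.sum_congr rfl fun i _ => ?_
    rw [← Finset.sum_add_distrib]
    refine Finset.sum_congr rfl fun j _ => ?_
    simp [Complex.mul_re, Complex.mul_im, Complex.conj_re, Complex.conj_im]
  have hre0 : 0 ≤ (Aform A x θ).re := by
    have h1 := hApos x (fun h i => (θ h i).re)
    have h2 := hApos x (fun h i => (θ h i).im)
    rw [hAre]
    exact add_nonneg h1 h2
  -- Step C : |Aform| ≤ T
  set T : ℝ := ∑ h, ∑ k, ∑ i, ∑ j, |A h k i j x| * a k j * a h i with hT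
  have habsT : ‖Aform A x θ‖ ≤ T := by
    rw [Aform, hT]
    refine le_trans (norm_sum_le _ _) (Finset.sum_le_sum fun h _ => ?_)
    refine le_trans (norm_sum_le _ _) (Finset.sum_le_sum fun k _ => ?_)
    refine le_trans (norm_sum_le _ _) (Finset.sum_le_sum fun i _ => ?_)
    refine le_trans (norm_sum_le _ _) (Finset.sum_le_sum fun j _ => ?_)
    rw [norm_mul, norm_mul]
    simp [ha, Complex.norm_real, Complex.norm_conj]
  -- Step D : T ≤ C * S
  have hterm : ∀ (h k : Fin d) (i j : Fin m), |A h k i j x| * a k j * a h i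
      ≤ (if h = k then k₂ else k₃) * ((q k k x * (a k j) ^ 2 + q h h x * (a h i) ^ 2) / 2) := by
    intro h k i j
    by_cases hhk : h = k
    · subst hhk
      have hle : |A h h i j x| ≤ k₂ * q h h x := by
        rcases hAdiag x h i j with ⟨h0, hle⟩
        rwa [abs_of_nonneg h0]
      have := aux_term (A h h i j x) (k₂ * q h h x) (k₂ * q h h x) (a h j) (a h i)
        (hanonneg h j) (hanonneg h i) hle hle
      rw [if_pos rfl]
      refine this.trans_eq ?_
      ring
    · have h1 := hAoff x h k hhk i j k
      have h2 := hAoff x h k hhk i j h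
      have := aux_term (A h k i j x) (k₃ * q k k x) (k₃ * q h h x) (a k j) (a h i)
        (hanonneg k j) (hanonneg h i) h1 h2
      rw [if_neg hhk]
      refine this.trans_eq ?_
      ring
  have hinner : ∀ h k : Fin d,
      (∑ i, ∑ j, ((q k k x * (a k j) ^ 2 + q h h x * (a h i) ^ 2) / 2))
      = (m : ℝ) * (P k + P h) / 2 := by
    intro h k
    rw [hP]
    simp only [add_div, Finset.sum_add_distrib, ← Finset.sum_div, Finset.sum_const,
      Finset.card_univ, Fintype.card_fin, nsmul_eq_mul, ← Finset.mul_sum]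
    ring
  have hPsum : ∀ h : Fin d, (∑ k, (P k + P h)) = S + (d : ℝ) * P h := by
    intro h
    rw [Finset.sum_add_distrib, Finset.sum_const, Finset.card_univ, Fintype.card_fin,
      nsmul_eq_mul, hS]
  have hrow : ∀ h : Fin d, (∑ k, (if h = k then k₂ else k₃) * ((m : ℝ) * (P k + P h) / 2))
      = k₃ * m / 2 * (S + d * P h) + (k₂ - k₃) * m * P h := by
    intro h
    have hsplit : ∀ k : Fin d, (if h = k then k₂ else k₃) * ((m : ℝ) * (P k + P h) / 2)
        = (k₃ * m / 2) * (P k + P h) + (if h = k then (k₂ - k₃) * ((m : ℝ) * P h) else 0) := by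
      intro k
      by_cases hk : h = k
      · subst hk; rw [if_pos rfl, if_pos rfl]; ring
      · rw [if_neg hk, if_neg hk]; ring
    rw [Finset.sum_congr rfl fun k _ => hsplit k, Finset.sum_add_distrib, Finset.sum_ite_eq,
      ← Finset.mul_sum, hPsum h]
    simp only [Finset.mem_univ, if_true]
    ring
  have hTS : T ≤ (m : ℝ) * (k₂ + d * k₃) * S := by
    have step1 : T ≤ ∑ h, ∑ k, (if h = k then k₂ else k₃) * ((m : ℝ) * (P k + P h) / 2) := by
      rw [hT]
      refine Finset.sum_le_sum fun h _ => Finset.sum_le_sum fun k _ => ?_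
      calc (∑ i, ∑ j, |A h k i j x| * a k j * a h i)
          ≤ ∑ i, ∑ j, (if h = k then k₂ else k₃)
              * ((q k k x * (a k j) ^ 2 + q h h x * (a h i) ^ 2) / 2) :=
            Finset.sum_le_sum fun i _ => Finset.sum_le_sum fun j _ => hterm h k i j
        _ = (if h = k then k₂ else k₃) * ((m : ℝ) * (P k + P h) / 2) := by
            simp only [← Finset.mul_sum]
            rw [hinner h k]
    have step2 : (∑ h, ∑ k, (if h = k then k₂ else k₃) * ((m : ℝ) * (P k + P h) / 2))
        = k₃ * m / 2 * ((d : ℝ) * S + (d : ℝ) * S) + (k₂ - k₃) * m * S := by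
      rw [Finset.sum_congr rfl fun h _ => hrow h, Finset.sum_add_distrib]
      congr 1
      · rw [← Finset.mul_sum, Finset.sum_add_distrib, Finset.sum_const, Finset.card_univ,
          Fintype.card_fin, nsmul_eq_mul, ← Finset.mul_sum, ← hS]
      · rw [← Finset.mul_sum, ← hS]
    refine step1.trans ?_
    rw [step2]
    have hms : (0:ℝ) ≤ (m : ℝ) * k₃ * S :=
      mul_nonneg (mul_nonneg (Nat.cast_nonneg m) hk₃.le) hSnn
    nlinarith [hms]
  refine ⟨hre0, ?_, ?_⟩
  · rw [hQre]
    calc (Aform A x θ).re ≤ |(Aform A x θ).re| := le_abs_self _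
      _ ≤ ‖Aform A x θ‖ := Complex.abs_re_le_norm _
      _ ≤ T := habsT
      _ ≤ _ := hTS
  · rw [hQre]
    calc |(Aform A x θ).im| ≤ ‖Aform A x θ‖ := Complex.abs_im_le_norm _
      _ ≤ T := habsT
      _ ≤ _ := hTS
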